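/- arXiv:1012.3826 — 4 statements merged into one kernel-verified Lean document; each statement's English description precedes it below -/
import Mathlib

section
/- For each i with 1 ≤ i ≤ n, the function Φ is partially differentiable in x_{1i} and x_{2i} at every point x with all coordinates positive, and x_{1i}·∂Φ/∂x_{1i}(x) + x_{2i}·∂Φ/∂x_{2i}(x) = α_i·Φ(x); that is, Φ is annihilated by the Euler operator θ_{1i} + θ_{2i} − α_i, where θ_{ij} = x_{ij}∂/∂x_{ij}. -/
open Complex Function MeasureTheory Metric intervalIntegral

lemma helper (a b : ℝ) (ha : 0 < a) (hab : a < b) (β : ℂ) (P : ℝ → ℂ)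
    (hP : ContinuousOn P (Set.uIcc a b)) (c d : ℝ → ℝ) (hc : Continuous c) (hd : Continuous d)
    (x₀ : ℝ) (hx₀ : 0 < x₀)
    (hpos : ∀ t ∈ Set.uIcc a b, ∀ s ∈ Metric.closedBall x₀ (x₀ / 2), 0 < c t + s * d t) :
    IntervalIntegrable
        (fun t => P t * (β * (((c t : ℝ) : ℂ) + (x₀ : ℂ) * (d t : ℂ)) ^ (β - 1) * (d t : ℂ)))
        volume a b
    ∧ HasDerivAt (fun s : ℝ => ∫ t in a..b, P t * (((c t : ℝ) : ℂ) + (s : ℂ) * (d t : ℂ)) ^ β)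
      (∫ t in a..b, P t * (β * (((c t : ℝ) : ℂ) + (x₀ : ℂ) * (d t : ℂ)) ^ (β - 1) * (d t : ℂ)))
      x₀ := by
  set F : ℝ → ℝ → ℂ := fun s t => P t * (((c t : ℝ) : ℂ) + (s : ℂ) * (d t : ℂ)) ^ β with hF
  set F' : ℝ → ℝ → ℂ :=
    fun s t => P t * (β * (((c t : ℝ) : ℂ) + (s : ℂ) * (d t : ℂ)) ^ (β - 1) * (d t : ℂ)) with hF'
  have hε : (0 : ℝ) < x₀ / 2 := by linarith
  -- base continuity
  have hbase : ∀ s : ℝ, Continuous fun t => ((c t : ℝ) : ℂ) + (s : ℂ) * (d t : ℂ) := by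
    intro s
    exact (Complex.continuous_ofReal.comp hc).add
      (continuous_const.mul (Complex.continuous_ofReal.comp hd))
  have hslit : ∀ s ∈ Metric.closedBall x₀ (x₀ / 2), ∀ t ∈ Set.uIcc a b,
      ((c t : ℝ) : ℂ) + (s : ℂ) * (d t : ℂ) ∈ Complex.slitPlane := by
    intro s hs t ht
    rw [Complex.mem_slitPlane_iff]
    left
    simpa using hpos t ht s hs
  have hFcont : ∀ s ∈ Metric.closedBall x₀ (x₀ / 2), ContinuousOn (F s) (Set.uIcc a b) := by
    intro s hs
    exact hP.mul (((hbase s).continuousOn).cpow_const fun t ht => hslit s hs t ht)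
  have hF'cont : ∀ s ∈ Metric.closedBall x₀ (x₀ / 2), ContinuousOn (F' s) (Set.uIcc a b) := by
    intro s hs
    exact hP.mul ((continuousOn_const.mul
      (((hbase s).continuousOn).cpow_const fun t ht => hslit s hs t ht)).mul
      (Complex.continuous_ofReal.comp hd).continuousOn)
  have hx₀mem : x₀ ∈ Metric.closedBall x₀ (x₀ / 2) := Metric.mem_closedBall_self hε.le
  -- joint continuity of F' and bound
  have hK : IsCompact (Metric.closedBall x₀ (x₀ / 2) ×ˢ Set.uIcc a b) :=
    (isCompact_closedBall _ _).prod isCompact_uIcc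
  have hG : ContinuousOn (fun q : ℝ × ℝ => F' q.1 q.2)
      (Metric.closedBall x₀ (x₀ / 2) ×ˢ Set.uIcc a b) := by
    have hb : ContinuousOn (fun q : ℝ × ℝ => ((c q.2 : ℝ) : ℂ) + (q.1 : ℂ) * (d q.2 : ℂ))
        (Metric.closedBall x₀ (x₀ / 2) ×ˢ Set.uIcc a b) := by
      fun_prop
    refine ContinuousOn.mul ?_ (ContinuousOn.mul (ContinuousOn.mul continuousOn_const ?_) ?_)
    · exact hP.comp continuousOn_snd fun q hq => hq.2
    · exact hb.cpow_const fun q hq => hslit q.1 hq.1 q.2 hq.2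
    · fun_prop
  obtain ⟨C, hC⟩ := hK.exists_bound_of_continuousOn hG
  refine intervalIntegral.hasDerivAt_integral_of_dominated_loc_of_deriv_le
    (F := F) (F' := F') (x₀ := x₀) (μ := volume) (a := a) (b := b) (bound := fun _ => C) (Metric.ball_mem_nhds x₀ hε)
    ?_ ?_ ?_ ?_ ?_ ?_
  · filter_upwards [Metric.ball_mem_nhds x₀ hε] with s hs
    exact ((hFcont s (Metric.ball_subset_closedBall hs)).mono
      Set.uIoc_subset_uIcc).aestronglyMeasurable measurableSet_uIoc
  · exact (hFcont x₀ hx₀mem).intervalIntegrable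
  · exact ((hF'cont x₀ hx₀mem).mono Set.uIoc_subset_uIcc).aestronglyMeasurable measurableSet_uIoc
  · refine Filter.Eventually.of_forall fun t ht s hs => ?_
    exact hC (s, t) ⟨Metric.ball_subset_closedBall hs, Set.uIoc_subset_uIcc ht⟩
  · exact intervalIntegrable_const
  · refine Filter.Eventually.of_forall fun t ht s hs => ?_
    have hb : HasDerivAt (fun s : ℝ => ((c t : ℝ) : ℂ) + (s : ℂ) * (d t : ℂ)) ((d t : ℂ)) s := by
      simpa using (Complex.ofRealCLM.hasDerivAt.mul_const ((d t : ℂ))).const_add ((c t : ℝ) : ℂ)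
    have hsl := hslit s (Metric.ball_subset_closedBall hs) t (Set.uIoc_subset_uIcc ht)
    have hcp := ((Complex.hasStrictDerivAt_cpow_const (c := β) hsl).hasDerivAt.comp s hb).const_mul (P t)
    exact hcp


/-- Partial derivative of `f` with respect to the coordinate `p`. -/
noncomputable def pd {n : ℕ} (p : Fin 2 × Fin n)
    (f : ((Fin 2 × Fin n) → ℝ) → ℂ) (x : (Fin 2 × Fin n) → ℝ) : ℂ :=
  deriv (fun s : ℝ => f (Function.update x p s)) (x p)

/-- `Φ(x) = ∫_a^b t^γ ∏ₖ (x_{1k} + x_{2k} t)^{α_k} dt`; the first row of `x` is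
indexed by `0 : Fin 2`, the second row by `1 : Fin 2`. -/
noncomputable def Phi {n : ℕ} (α : Fin n → ℂ) (γ : ℂ) (a b : ℝ)
    (x : (Fin 2 × Fin n) → ℝ) : ℂ :=
  ∫ t in a..b, (t : ℂ) ^ γ * ∏ k, ((x (0, k) : ℂ) + (x (1, k) : ℂ) * (t : ℂ)) ^ (α k)

/-- `Φ` is partially differentiable in `x_{1i}` and `x_{2i}` and is
annihilated by the Euler operator `θ_{1i} + θ_{2i} − α_i`. -/

theorem stmt3 {n : ℕ} (hn : 1 ≤ n) (α : Fin n → ℂ) (γ : ℂ) (a b : ℝ)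
    (ha : 0 < a) (hab : a < b) (hγ : 0 < γ.re) (hα : ∀ k, 0 < (α k).re)
    (i : Fin n) (x : (Fin 2 × Fin n) → ℝ) (hx : ∀ p, 0 < x p) :
    DifferentiableAt ℝ
        (fun s : ℝ => Phi α γ a b (Function.update x (0, i) s)) (x (0, i))
    ∧ DifferentiableAt ℝ
        (fun s : ℝ => Phi α γ a b (Function.update x (1, i) s)) (x (1, i))
    ∧ (x (0, i) : ℂ) * pd (0, i) (Phi α γ a b) x
        + (x (1, i) : ℂ) * pd (1, i) (Phi α γ a b) x
        = α i * Phi α γ a b x := by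
  classical
  have hx₀ : 0 < x (0, i) := hx _
  have hx₁ : 0 < x (1, i) := hx _
  have htpos : ∀ t ∈ Set.uIcc a b, 0 < t := by
    intro t ht
    rw [Set.uIcc_of_le hab.le] at ht
    linarith [ht.1]
  set P : ℝ → ℂ := fun t => (t : ℂ) ^ γ *
    ∏ k ∈ Finset.univ.erase i, ((x (0, k) : ℂ) + (x (1, k) : ℂ) * (t : ℂ)) ^ (α k) with hPdef
  have hPcont : ContinuousOn P (Set.uIcc a b) := by
    apply ContinuousOn.mul
    · exact Complex.continuous_ofReal.continuousOn.cpow_const fun t ht =>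
        Complex.ofReal_mem_slitPlane.2 (htpos t ht)
    · apply continuousOn_finset_prod
      intro k _
      refine (ContinuousOn.cpow_const ?_ ?_)
      · fun_prop
      · intro t ht
        rw [Complex.mem_slitPlane_iff]
        left
        have := htpos t ht
        have := hx (0, k); have := hx (1, k)
        simp only [Complex.add_re, Complex.ofReal_re, Complex.mul_re, Complex.ofReal_im]
        nlinarith
  -- rewriting the product after update
  have hupd : ∀ (j : Fin 2) (s t : ℝ),
      (∏ k, ((Function.update x (j, i) s (0, k) : ℂ)
          + (Function.update x (j, i) s (1, k) : ℂ) * (t : ℂ)) ^ (α k))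
      = ((Function.update x (j, i) s (0, i) : ℂ)
          + (Function.update x (j, i) s (1, i) : ℂ) * (t : ℂ)) ^ (α i)
        * ∏ k ∈ Finset.univ.erase i, ((x (0, k) : ℂ) + (x (1, k) : ℂ) * (t : ℂ)) ^ (α k) := by
    intro j s t
    rw [← Finset.mul_prod_erase Finset.univ _ (Finset.mem_univ i)]
    congr 1
    refine Finset.prod_congr rfl fun k hk => ?_
    have hki : k ≠ i := (Finset.mem_erase.1 hk).1
    rw [Function.update_of_ne (by simp [hki]), Function.update_of_ne (by simp [hki])]
  -- case j = 0
  have h0 : (fun s : ℝ => Phi α γ a b (Function.update x (0, i) s))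
      = fun s : ℝ => ∫ t in a..b,
        P t * (((x (1, i) * t : ℝ) : ℂ) + (s : ℂ) * ((1 : ℝ) : ℂ)) ^ (α i) := by
    funext s
    refine intervalIntegral.integral_congr fun t _ => ?_
    show (t : ℂ) ^ γ * _ = _
    rw [hupd 0 s t, Function.update_self, Function.update_of_ne (by simp)]
    rw [show ((x (1, i) * t : ℝ) : ℂ) + (s : ℂ) * ((1 : ℝ) : ℂ)
        = (s : ℂ) + ((x (1, i) : ℝ) : ℂ) * (t : ℂ) by push_cast; ring]
    simp only [hPdef]
    ring
  have h1 : (fun s : ℝ => Phi α γ a b (Function.update x (1, i) s))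
      = fun s : ℝ => ∫ t in a..b,
        P t * (((x (0, i) : ℝ) : ℂ) + (s : ℂ) * ((t : ℝ) : ℂ)) ^ (α i) := by
    funext s
    refine intervalIntegral.integral_congr fun t _ => ?_
    show (t : ℂ) ^ γ * _ = _
    rw [hupd 1 s t, Function.update_self, Function.update_of_ne (by simp)]
    simp only [hPdef]
    ring
  have hball : ∀ x₀ : ℝ, 0 < x₀ → ∀ s ∈ Metric.closedBall x₀ (x₀ / 2), 0 < s := by
    intro x₀ h s hs
    rw [Metric.mem_closedBall, Real.dist_eq, abs_le] at hs
    linarith [hs.1]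
  have D0 := helper a b ha hab (α i) P hPcont (fun t => x (1, i) * t) (fun _ => 1)
    (by fun_prop) (by fun_prop) (x (0, i)) hx₀
    (fun t ht s hs => by
      have := htpos t ht
      have := hball _ hx₀ s hs
      show (0:ℝ) < x (1, i) * t + s * 1
      nlinarith)
  have D1 := helper a b ha hab (α i) P hPcont (fun _ => x (0, i)) (fun t => t)
    (by fun_prop) (by fun_prop) (x (1, i)) hx₁
    (fun t ht s hs => by
      have := htpos t ht
      have := hball _ hx₁ s hs
      show (0:ℝ) < x (0, i) + s * t
      nlinarith)
  have hd0 : HasDerivAt (fun s : ℝ => Phi α γ a b (Function.update x (0, i) s))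
      (∫ t in a..b, P t * (α i * (((x (1, i) * t : ℝ) : ℂ)
        + ((x (0, i) : ℝ) : ℂ) * ((1 : ℝ) : ℂ)) ^ (α i - 1) * ((1 : ℝ) : ℂ))) (x (0, i)) := by
    rw [h0]; exact D0.2
  have hd1 : HasDerivAt (fun s : ℝ => Phi α γ a b (Function.update x (1, i) s))
      (∫ t in a..b, P t * (α i * (((x (0, i) : ℝ) : ℂ)
        + ((x (1, i) : ℝ) : ℂ) * ((t : ℝ) : ℂ)) ^ (α i - 1) * ((t : ℝ) : ℂ))) (x (1, i)) := by
    rw [h1]; exact D1.2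
  refine ⟨hd0.differentiableAt, hd1.differentiableAt, ?_⟩
  rw [show pd (0, i) (Phi α γ a b) x = _ from hd0.deriv,
      show pd (1, i) (Phi α γ a b) x = _ from hd1.deriv]
  rw [← intervalIntegral.integral_const_mul, ← intervalIntegral.integral_const_mul,
      ← intervalIntegral.integral_add (D0.1.const_mul _) (D1.1.const_mul _)]
  rw [Phi, ← intervalIntegral.integral_const_mul]
  refine intervalIntegral.integral_congr fun t ht => ?_
  have ht0 : 0 < t := htpos t ht
  set Z : ℂ := (x (0, i) : ℂ) + (x (1, i) : ℂ) * (t : ℂ) with hZdef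
  have hZ : Z ≠ 0 := by
    intro h
    have := congrArg Complex.re h
    simp only [hZdef, Complex.add_re, Complex.ofReal_re, Complex.mul_re, Complex.ofReal_im,
      Complex.zero_re] at this
    nlinarith
  have hkey : Z ^ (α i - 1) * Z = Z ^ (α i) := by
    rw [Complex.cpow_sub _ _ hZ, Complex.cpow_one, div_mul_cancel₀ _ hZ]
  rw [show ((x (1, i) * t : ℝ) : ℂ) + ((x (0, i) : ℝ) : ℂ) * ((1 : ℝ) : ℂ) = Z by
    rw [hZdef]; push_cast; ring]
  rw [← Finset.mul_prod_erase Finset.univ _ (Finset.mem_univ i), ← hZdef]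
  simp only [hPdef]
  push_cast
  linear_combination (α i * ((t : ℂ) ^ γ *
      ∏ k ∈ Finset.univ.erase i, ((x (0, k) : ℂ) + (x (1, k) : ℂ) * (t : ℂ)) ^ (α k))) * hkey
    - (α i * ((t : ℂ) ^ γ *
      ∏ k ∈ Finset.univ.erase i, ((x (0, k) : ℂ) + (x (1, k) : ℂ) * (t : ℂ)) ^ (α k))
      * Z ^ (α i - 1)) * hZdef
end

section
/- For all i < j with 1 ≤ i < j ≤ n, the mixed partial derivatives of Φ exist at every point x with all coordinates positive and satisfy ∂²Φ/∂x_{1i}∂x_{2j}(x) = ∂²Φ/∂x_{1j}∂x_{2i}(x); that is, Φ is annihilated by the toric operator ∂_{1i}∂_{2j} − ∂_{1j}∂_{2i}. -/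
open Complex Function

section Aux

open MeasureTheory Metric Set Filter

/-- General integrand `c t^δ ∏ₖ (x₀ₖ + x₁ₖ t)^{βₖ}`. -/
noncomputable def Gq {n : ℕ} (c δ : ℂ) (β : Fin n → ℂ)
    (x : (Fin 2 × Fin n) → ℝ) (t : ℝ) : ℂ :=
  c * (t : ℂ) ^ δ * ∏ k, ((x (0, k) : ℂ) + (x (1, k) : ℂ) * (t : ℂ)) ^ (β k)

/-- General integral `∫_a^b c t^δ ∏ₖ (x₀ₖ + x₁ₖ t)^{βₖ} dt`. -/
noncomputable def Qq {n : ℕ} (c δ : ℂ) (β : Fin n → ℂ) (a b : ℝ)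
    (x : (Fin 2 × Fin n) → ℝ) : ℂ :=
  ∫ t in a..b, Gq c δ β x t

lemma Phi_eq_Qq {n : ℕ} (α : Fin n → ℂ) (γ : ℂ) (a b : ℝ) :
    Phi α γ a b = Qq 1 γ α a b := by
  funext x
  simp only [Phi, Qq, Gq, one_mul]

lemma contAt_Gq {n : ℕ} (c δ : ℂ) (β : Fin n → ℂ) {x : (Fin 2 × Fin n) → ℝ} {t : ℝ}
    (hx : ∀ p, 0 < x p) (ht : 0 < t) :
    ContinuousAt (fun q : ((Fin 2 × Fin n) → ℝ) × ℝ =>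
      Gq c δ β q.1 q.2) (x, t) := by
  unfold Gq
  apply ContinuousAt.mul
  · apply ContinuousAt.mul continuousAt_const
    refine ContinuousAt.cpow
      (Complex.continuous_ofReal.comp continuous_snd).continuousAt continuousAt_const ?_
    left
    simpa using ht
  · refine tendsto_finset_prod _ fun k _ => ?_
    refine ContinuousAt.cpow ?_ continuousAt_const ?_
    · exact (((Complex.continuous_ofReal.comp
        ((continuous_apply (((0 : Fin 2), k) : Fin 2 × Fin n)).comp continuous_fst)).add
        ((Complex.continuous_ofReal.comp
          ((continuous_apply (((1 : Fin 2), k) : Fin 2 × Fin n)).comp continuous_fst)).mul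
          (Complex.continuous_ofReal.comp continuous_snd)))).continuousAt
    · left
      have h : ((x (0, k) : ℂ) + (x (1, k) : ℂ) * (t : ℂ))
          = ((x (0, k) + x (1, k) * t : ℝ) : ℂ) := by push_cast; ring
      rw [h, Complex.ofReal_re]
      have h0 := hx (0, k); have h1 := hx (1, k)
      positivity

/-- Differentiation under the interval integral, for jointly continuous data. -/
lemma hasDerivAt_intervalIntegral_of_cont {F F' : ℝ → ℝ → ℂ} {s₀ a b ε : ℝ}
    (hε : 0 < ε) (hab : a ≤ b)
    (hF : ∀ s ∈ closedBall s₀ ε, ∀ t ∈ Icc a b,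
      ContinuousAt (fun q : ℝ × ℝ => F q.1 q.2) (s, t))
    (hF' : ∀ s ∈ closedBall s₀ ε, ∀ t ∈ Icc a b,
      ContinuousAt (fun q : ℝ × ℝ => F' q.1 q.2) (s, t))
    (hd : ∀ s ∈ ball s₀ ε, ∀ t ∈ Icc a b, HasDerivAt (fun u => F u t) (F' s t) s) :
    HasDerivAt (fun s => ∫ t in a..b, F s t) (∫ t in a..b, F' s₀ t) s₀ := by
  have hIcc : Set.uIcc a b = Set.Icc a b := Set.uIcc_of_le hab
  have hIsub : Set.uIoc a b ⊆ Set.Icc a b := by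
    rw [Set.uIoc_of_le hab]; exact Set.Ioc_subset_Icc_self
  have hcoF : ∀ s ∈ closedBall s₀ ε, ContinuousOn (F s) (Set.Icc a b) := by
    intro s hs t ht
    exact (((hF s hs t ht).comp ((Continuous.prodMk_right s).continuousAt))).continuousWithinAt
  have hcoF' : ∀ s ∈ closedBall s₀ ε, ContinuousOn (F' s) (Set.Icc a b) := by
    intro s hs t ht
    exact (((hF' s hs t ht).comp ((Continuous.prodMk_right s).continuousAt))).continuousWithinAt
  have hcomp : IsCompact ((closedBall s₀ ε) ×ˢ (Set.Icc a b)) :=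
    (isCompact_closedBall s₀ ε).prod isCompact_Icc
  have hco2 : ContinuousOn (fun q : ℝ × ℝ => F' q.1 q.2) ((closedBall s₀ ε) ×ˢ (Set.Icc a b)) :=
    fun q hq => (hF' q.1 hq.1 q.2 hq.2).continuousWithinAt
  obtain ⟨C, hC⟩ := hcomp.exists_bound_of_continuousOn hco2
  have key := intervalIntegral.hasDerivAt_integral_of_dominated_loc_of_deriv_le
    (F := F) (F' := F') (x₀ := s₀) (μ := volume) (bound := fun _ => C) (a := a) (b := b) (ball_mem_nhds s₀ hε)
    ?_ ?_ ?_ ?_ ?_ ?_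
  · exact key.2
  · filter_upwards [ball_mem_nhds s₀ hε] with s hs
    exact (((hcoF s (ball_subset_closedBall hs)).mono hIsub)).aestronglyMeasurable
      measurableSet_uIoc
  · apply ContinuousOn.intervalIntegrable
    rw [hIcc]
    exact hcoF s₀ (mem_closedBall_self hε.le)
  · exact (((hcoF' s₀ (mem_closedBall_self hε.le)).mono hIsub)).aestronglyMeasurable
      measurableSet_uIoc
  · refine Filter.Eventually.of_forall fun t ht s hs => ?_
    exact hC (s, t) ⟨ball_subset_closedBall hs, hIsub ht⟩
  · exact intervalIntegrable_const
  · exact Filter.Eventually.of_forall fun t ht s hs => hd s hs t (hIsub ht)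

lemma hasDerivAt_Gq {n : ℕ} (c δ : ℂ) (β : Fin n → ℂ) (p : Fin 2 × Fin n)
    (x : (Fin 2 × Fin n) → ℝ) (hx : ∀ q, 0 < x q) {t : ℝ} (ht : 0 < t) :
    HasDerivAt (fun s : ℝ => Gq c δ β (Function.update x p s) t)
      (Gq (c * β p.2) (δ + ((p.1 : ℕ) : ℂ)) (Function.update β p.2 (β p.2 - 1)) x t)
      (x p) := by
  obtain ⟨r, m⟩ := p
  have hb : (0 : ℝ) < x (0, m) + x (1, m) * t := by
    have h0 := hx (0, m); have h1 := hx (1, m); positivity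
  have hcast : ((x (0, m) : ℂ) + (x (1, m) : ℂ) * (t : ℂ))
      = ((x (0, m) + x (1, m) * t : ℝ) : ℂ) := by push_cast; ring
  have hslit : ((x (0, m) : ℂ) + (x (1, m) : ℂ) * (t : ℂ)) ∈ Complex.slitPlane := by
    left; rw [hcast, Complex.ofReal_re]; exact hb
  set P : ℂ := ∏ k ∈ Finset.univ.erase m,
    ((x (0, k) : ℂ) + (x (1, k) : ℂ) * (t : ℂ)) ^ (β k) with hP
  have hprodrest : ∀ s : ℝ, ∏ k ∈ Finset.univ.erase m,
      ((Function.update x (r, m) s (0, k) : ℂ)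
        + (Function.update x (r, m) s (1, k) : ℂ) * (t : ℂ)) ^ (β k) = P := by
    intro s
    refine Finset.prod_congr rfl fun k hk => ?_
    have hkm : k ≠ m := Finset.ne_of_mem_erase hk
    rw [Function.update_of_ne (by simp [hkm]), Function.update_of_ne (by simp [hkm])]
  have hfun : (fun s : ℝ => Gq c δ β (Function.update x (r, m) s) t)
      = fun s : ℝ => c * (t : ℂ) ^ δ *
          (((Function.update x (r, m) s (0, m) : ℂ)
            + (Function.update x (r, m) s (1, m) : ℂ) * (t : ℂ)) ^ (β m) * P) := by
    funext s
    simp only [Gq]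
    rw [← Finset.mul_prod_erase Finset.univ _ (Finset.mem_univ m), hprodrest s]
  have htarget : Gq (c * β m) (δ + (((r : Fin 2) : ℕ) : ℂ)) (Function.update β m (β m - 1)) x t
      = (c * β m) * (t : ℂ) ^ (δ + (((r : Fin 2) : ℕ) : ℂ)) *
          (((x (0, m) : ℂ) + (x (1, m) : ℂ) * (t : ℂ)) ^ (β m - 1) * P) := by
    simp only [Gq]
    rw [← Finset.mul_prod_erase Finset.univ _ (Finset.mem_univ m), Function.update_self]
    congr 2
    refine Finset.prod_congr rfl fun k hk => ?_
    rw [Function.update_of_ne (Finset.ne_of_mem_erase hk)]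
  rw [hfun, htarget]
  have htne : (t : ℂ) ≠ 0 := by exact_mod_cast ht.ne'
  have hr : r = 0 ∨ r = 1 := by omega
  rcases hr with rfl | rfl
  · -- r = 0
    have hupd1 : ∀ s : ℝ, Function.update x ((0 : Fin 2), m) s ((0 : Fin 2), m) = s :=
      fun s => Function.update_self _ _ _
    have hupd2 : ∀ s : ℝ, Function.update x ((0 : Fin 2), m) s ((1 : Fin 2), m) = x (1, m) :=
      fun s => Function.update_of_ne (by simp) _ _
    simp only [hupd1, hupd2]
    have hinner : HasDerivAt (fun z : ℂ => (z + (x (1, m) : ℂ) * (t : ℂ)) ^ (β m))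
        (β m * ((x (0, m) : ℂ) + (x (1, m) : ℂ) * (t : ℂ)) ^ (β m - 1) * 1)
        ((x (0, m) : ℂ)) :=
      ((hasDerivAt_id ((x (0, m) : ℂ))).add_const ((x (1, m) : ℂ) * (t : ℂ))).cpow_const
        hslit
    have hre := hinner.comp_ofReal
    have final := (hre.mul_const P).const_mul (c * (t : ℂ) ^ δ)
    convert final using 1
    all_goals try rfl
    have h0 : ((((0 : Fin 2) : ℕ)) : ℂ) = 0 := by norm_num
    rw [h0, add_zero]
    ring
  · -- r = 1
    have hupd1 : ∀ s : ℝ, Function.update x ((1 : Fin 2), m) s ((1 : Fin 2), m) = s :=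
      fun s => Function.update_self _ _ _
    have hupd2 : ∀ s : ℝ, Function.update x ((1 : Fin 2), m) s ((0 : Fin 2), m) = x (0, m) :=
      fun s => Function.update_of_ne (by simp) _ _
    simp only [hupd1, hupd2]
    have hinner : HasDerivAt (fun z : ℂ => ((x (0, m) : ℂ) + z * (t : ℂ)) ^ (β m))
        (β m * ((x (0, m) : ℂ) + (x (1, m) : ℂ) * (t : ℂ)) ^ (β m - 1) * (1 * (t : ℂ)))
        ((x (1, m) : ℂ)) :=
      (((hasDerivAt_id ((x (1, m) : ℂ))).mul_const ((t : ℂ))).const_add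
        ((x (0, m) : ℂ))).cpow_const hslit
    have hre := hinner.comp_ofReal
    have final := (hre.mul_const P).const_mul (c * (t : ℂ) ^ δ)
    convert final using 1
    all_goals try rfl
    have h1 : ((((1 : Fin 2) : ℕ)) : ℂ) = 1 := by norm_num
    rw [h1, Complex.cpow_add _ _ htne, Complex.cpow_one]
    ring

lemma pos_update {n : ℕ} {x : (Fin 2 × Fin n) → ℝ} (hx : ∀ q, 0 < x q)
    (p : Fin 2 × Fin n) {s : ℝ} (hs : 0 < s) : ∀ q, 0 < Function.update x p s q := by
  intro q
  rcases eq_or_ne q p with rfl | h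
  · rwa [Function.update_self]
  · rw [Function.update_of_ne h]; exact hx q

set_option maxHeartbeats 1000000 in
lemma hasDerivAt_Qq {n : ℕ} (c δ : ℂ) (β : Fin n → ℂ) {a b : ℝ} (ha : 0 < a) (hab : a ≤ b)
    (p : Fin 2 × Fin n) (x : (Fin 2 × Fin n) → ℝ) (hx : ∀ q, 0 < x q) :
    HasDerivAt (fun s => Qq c δ β a b (Function.update x p s))
      (Qq (c * β p.2) (δ + ((p.1 : ℕ) : ℂ)) (Function.update β p.2 (β p.2 - 1)) a b x)
      (x p) := by
  set ε : ℝ := x p / 2 with hεdef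
  have hεpos : 0 < ε := half_pos (hx p)
  have hposball : ∀ s ∈ closedBall (x p) ε, 0 < s := by
    intro s hs
    rw [mem_closedBall, Real.dist_eq, abs_le] at hs
    have := hs.1
    have hxp := hx p
    simp only [hεdef] at this ⊢
    linarith
  have hcont : ∀ (c' δ' : ℂ) (β' : Fin n → ℂ),
      ∀ s ∈ closedBall (x p) ε, ∀ t ∈ Icc a b,
      ContinuousAt (fun q : ℝ × ℝ => Gq c' δ' β' (Function.update x p q.1) q.2) (s, t) := by
    intro c' δ' β' s hs t htt
    have hφ : Continuous fun q : ℝ × ℝ => ((Function.update x p q.1, q.2) :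
        ((Fin 2 × Fin n) → ℝ) × ℝ) :=
      by fun_prop
    have hpt : ContinuousAt (fun q : ((Fin 2 × Fin n) → ℝ) × ℝ => Gq c' δ' β' q.1 q.2)
        (Function.update x p s, t) :=
      contAt_Gq c' δ' β' (pos_update hx p (hposball s hs)) (lt_of_lt_of_le ha htt.1)
    exact ContinuousAt.comp
      (g := fun q : ((Fin 2 × Fin n) → ℝ) × ℝ => Gq c' δ' β' q.1 q.2)
      (f := fun q : ℝ × ℝ => ((Function.update x p q.1, q.2) : ((Fin 2 × Fin n) → ℝ) × ℝ))
      (x := ((s, t) : ℝ × ℝ)) hpt hφ.continuousAt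
  have hd' : ∀ s ∈ ball (x p) ε, ∀ t ∈ Icc a b,
      HasDerivAt (fun u => Gq c δ β (Function.update x p u) t)
        (Gq (c * β p.2) (δ + ((p.1 : ℕ) : ℂ)) (Function.update β p.2 (β p.2 - 1))
          (Function.update x p s) t) s := by
    intro s hs t htt
    have hs' : 0 < s := hposball s (ball_subset_closedBall hs)
    have := hasDerivAt_Gq c δ β p (Function.update x p s) (pos_update hx p hs')
      (lt_of_lt_of_le ha htt.1)
    simpa only [Function.update_idem, Function.update_self] using this
  rw [show (Qq (c * β p.2) (δ + ((p.1 : ℕ) : ℂ)) (Function.update β p.2 (β p.2 - 1)) a b x)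
      = Qq (c * β p.2) (δ + ((p.1 : ℕ) : ℂ)) (Function.update β p.2 (β p.2 - 1)) a b
        (Function.update x p (x p)) from by rw [Function.update_eq_self]]
  exact hasDerivAt_intervalIntegral_of_cont hεpos hab (hcont c δ β)
    (hcont (c * β p.2) (δ + ((p.1 : ℕ) : ℂ)) (Function.update β p.2 (β p.2 - 1))) hd'

lemma pd_Qq {n : ℕ} (c δ : ℂ) (β : Fin n → ℂ) {a b : ℝ} (ha : 0 < a) (hab : a ≤ b)
    (p : Fin 2 × Fin n) (x : (Fin 2 × Fin n) → ℝ) (hx : ∀ q, 0 < x q) :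
    pd p (Qq c δ β a b) x
      = Qq (c * β p.2) (δ + ((p.1 : ℕ) : ℂ)) (Function.update β p.2 (β p.2 - 1)) a b x := by
  unfold pd
  exact (hasDerivAt_Qq c δ β ha hab p x hx).deriv

end Aux

/-- the mixed partial derivatives of `Φ` exist and
`Φ` is annihilated by the toric operator `∂_{1i}∂_{2j} − ∂_{1j}∂_{2i}`. -/
theorem stmt4 {n : ℕ} (hn : 1 ≤ n) (α : Fin n → ℂ) (γ : ℂ) (a b : ℝ)
    (ha : 0 < a) (hab : a < b) (hγ : 0 < γ.re) (hα : ∀ k, 0 < (α k).re)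
    (i j : Fin n) (hij : i < j) (x : (Fin 2 × Fin n) → ℝ) (hx : ∀ p, 0 < x p) :
    DifferentiableAt ℝ
        (fun s : ℝ => Phi α γ a b (Function.update x (1, j) s)) (x (1, j))
    ∧ DifferentiableAt ℝ
        (fun s : ℝ => pd (1, j) (Phi α γ a b) (Function.update x (0, i) s)) (x (0, i))
    ∧ DifferentiableAt ℝ
        (fun s : ℝ => Phi α γ a b (Function.update x (1, i) s)) (x (1, i))
    ∧ DifferentiableAt ℝ
        (fun s : ℝ => pd (1, i) (Phi α γ a b) (Function.update x (0, j) s)) (x (0, j))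
    ∧ pd (0, i) (pd (1, j) (Phi α γ a b)) x
        = pd (0, j) (pd (1, i) (Phi α γ a b)) x := by
  have hab' : a ≤ b := hab.le
  -- first derivatives in the (1, m) directions
  have h1 : ∀ (m : Fin n) (y : (Fin 2 × Fin n) → ℝ), (∀ q, 0 < y q) →
      HasDerivAt (fun s => Phi α γ a b (Function.update y (1, m) s))
        (Qq (α m) (γ + 1) (Function.update α m (α m - 1)) a b y) (y (1, m)) := by
    intro m y hy
    rw [Phi_eq_Qq]
    have := hasDerivAt_Qq 1 γ α ha hab' (1, m) y hy
    simpa using this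
  have pd_Phi : ∀ (m : Fin n) (y : (Fin 2 × Fin n) → ℝ), (∀ q, 0 < y q) →
      pd (1, m) (Phi α γ a b) y
        = Qq (α m) (γ + 1) (Function.update α m (α m - 1)) a b y := by
    intro m y hy
    unfold pd
    exact (h1 m y hy).deriv
  -- the eventual equality near a point in the (0, q) direction
  have hev : ∀ (q m : Fin n),
      (fun s => pd (1, m) (Phi α γ a b) (Function.update x (0, q) s))
        =ᶠ[nhds (x (0, q))]
      (fun s => Qq (α m) (γ + 1) (Function.update α m (α m - 1)) a b
        (Function.update x (0, q) s)) := by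
    intro q m
    filter_upwards [eventually_gt_nhds (hx (0, q))] with s hs
    exact pd_Phi m _ (pos_update hx (0, q) hs)
  have h2 : ∀ (q m : Fin n),
      HasDerivAt (fun s => Qq (α m) (γ + 1) (Function.update α m (α m - 1)) a b
          (Function.update x (0, q) s))
        (Qq (α m * Function.update α m (α m - 1) q) (γ + 1)
          (Function.update (Function.update α m (α m - 1)) q
            (Function.update α m (α m - 1) q - 1)) a b x)
        (x (0, q)) := by
    intro q m
    have := hasDerivAt_Qq (α m) (γ + 1) (Function.update α m (α m - 1)) ha hab'
      (0, q) x hx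
    simpa using this
  have hdiff2 : ∀ (q m : Fin n), DifferentiableAt ℝ
      (fun s => pd (1, m) (Phi α γ a b) (Function.update x (0, q) s)) (x (0, q)) := by
    intro q m
    exact (h2 q m).differentiableAt.congr_of_eventuallyEq (hev q m)
  have hder2 : ∀ (q m : Fin n), pd (0, q) (pd (1, m) (Phi α γ a b)) x
      = Qq (α m * Function.update α m (α m - 1) q) (γ + 1)
          (Function.update (Function.update α m (α m - 1)) q
            (Function.update α m (α m - 1) q - 1)) a b x := by
    intro q m
    have hpd : pd (0, q) (pd (1, m) (Phi α γ a b)) x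
        = deriv (fun s => pd (1, m) (Phi α γ a b) (Function.update x (0, q) s))
          (x (0, q)) := rfl
    rw [hpd, Filter.EventuallyEq.deriv_eq (hev q m)]
    exact (h2 q m).deriv
  refine ⟨(h1 j x hx).differentiableAt, hdiff2 i j, (h1 i x hx).differentiableAt,
    hdiff2 j i, ?_⟩
  rw [hder2 i j, hder2 j i]
  have hji : Function.update α j (α j - 1) i = α i := Function.update_of_ne hij.ne _ _
  have hij' : Function.update α i (α i - 1) j = α j := Function.update_of_ne hij.ne' _ _
  rw [hji, hij', mul_comm (α j) (α i),
    Function.update_comm hij.ne' (α j - 1) (α i - 1) α]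
end

section
/- At every point x with all coordinates positive, Φ satisfies the inhomogeneous equation Σ_{i=1}^n x_{2i}·∂Φ/∂x_{2i}(x) + (γ+1)·Φ(x) = g(b,x) − g(a,x), where g(t,x) = t^{γ+1} ∏_{k=1}^n (x_{1k} + x_{2k} t)^{α_k}. Hence the integral Φ is a solution of the incomplete Δ₁×Δ_{n−1}-hypergeometric system with inhomogeneous part [g(t,x)]_{t=a}^{t=b}. -/
open Complex Function

/-- `g(t,x) = t^(γ+1) ∏ₖ (x_{1k} + x_{2k} t)^{α_k}`. -/
noncomputable def gfun {n : ℕ} (α : Fin n → ℂ) (γ : ℂ) (t : ℝ)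
    (x : (Fin 2 × Fin n) → ℝ) : ℂ :=
  (t : ℂ) ^ (γ + 1) * ∏ k, ((x (0, k) : ℂ) + (x (1, k) : ℂ) * (t : ℂ)) ^ (α k)

namespace Stmt5Aux

/-- The affine base `x_{1k} + x_{2k} t`. -/
noncomputable def Zf {n : ℕ} (x : (Fin 2 × Fin n) → ℝ) (k : Fin n) (t : ℝ) : ℂ :=
  (x (0, k) : ℂ) + (x (1, k) : ℂ) * (t : ℂ)

/-- The integrand of `Phi`. -/
noncomputable def intg {n : ℕ} (α : Fin n → ℂ) (γ : ℂ) (x : (Fin 2 × Fin n) → ℝ)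
    (t : ℝ) : ℂ :=
  (t : ℂ) ^ γ * ∏ k, Zf x k t ^ α k

/-- The integrand of `∂Phi/∂x_{2i}`. -/
noncomputable def Dg {n : ℕ} (α : Fin n → ℂ) (γ : ℂ) (x : (Fin 2 × Fin n) → ℝ)
    (i : Fin n) (t : ℝ) : ℂ :=
  (t : ℂ) ^ γ * (α i * Zf x i t ^ (α i - 1) * (t : ℂ)) *
    ∏ k ∈ Finset.univ.erase i, Zf x k t ^ α k

lemma re_pos (c s t : ℝ) (h0 : 0 < c) (hs : 0 ≤ s) (ht : 0 ≤ t) :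
    0 < ((c : ℂ) + (s : ℂ) * (t : ℂ)).re := by
  have h : ((c : ℂ) + (s : ℂ) * (t : ℂ)) = ((c + s * t : ℝ) : ℂ) := by push_cast; ring
  rw [h, Complex.ofReal_re]; positivity

lemma contOn_cpow {X : Type*} [TopologicalSpace X] {f : X → ℂ} {s : Set X}
    (hf : ContinuousOn f s) (h : ∀ p ∈ s, 0 < (f p).re) (w : ℂ) :
    ContinuousOn (fun p => f p ^ w) s :=
  fun p hp => (hf p hp).cpow continuousWithinAt_const (Or.inl (h p hp))

lemma hasDerivAt_cpow_aff_s (c t s : ℝ) (h : 0 < ((c : ℂ) + (s : ℂ) * (t : ℂ)).re) (w : ℂ) :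
    HasDerivAt (fun s : ℝ => ((c : ℂ) + (s : ℂ) * (t : ℂ)) ^ w)
      (w * ((c : ℂ) + (s : ℂ) * (t : ℂ)) ^ (w - 1) * (t : ℂ)) s := by
  have h2 : HasDerivAt (fun z : ℂ => (c : ℂ) + z * (t : ℂ)) (t : ℂ) ((s : ℝ) : ℂ) := by
    simpa using ((hasDerivAt_id ((s : ℝ) : ℂ)).mul_const (t : ℂ)).const_add (c : ℂ)
  exact (h2.cpow_const (Or.inl h)).comp_ofReal

lemma hasDerivAt_cpow_aff_t (c0 c1 t : ℝ) (h : 0 < ((c0 : ℂ) + (c1 : ℂ) * (t : ℂ)).re) (w : ℂ) :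
    HasDerivAt (fun t : ℝ => ((c0 : ℂ) + (c1 : ℂ) * (t : ℂ)) ^ w)
      (w * ((c0 : ℂ) + (c1 : ℂ) * (t : ℂ)) ^ (w - 1) * (c1 : ℂ)) t := by
  have h2 : HasDerivAt (fun z : ℂ => (c0 : ℂ) + (c1 : ℂ) * z) (c1 : ℂ) ((t : ℝ) : ℂ) := by
    simpa using ((hasDerivAt_id ((t : ℝ) : ℂ)).const_mul (c1 : ℂ)).const_add (c0 : ℂ)
  exact (h2.cpow_const (Or.inl h)).comp_ofReal

lemma hasDerivAt_cpow_real (t : ℝ) (ht : 0 < t) (w : ℂ) :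
    HasDerivAt (fun s : ℝ => ((s : ℂ)) ^ w) (w * (t : ℂ) ^ (w - 1)) t :=
  (Complex.hasStrictDerivAt_cpow_const (Or.inl (by simpa using ht))).hasDerivAt.comp_ofReal

lemma contOn_intg {n : ℕ} (α : Fin n → ℂ) (γ : ℂ) (x : (Fin 2 × Fin n) → ℝ)
    {a b : ℝ} (ha : 0 < a) (hx : ∀ p, 0 < x p) :
    ContinuousOn (intg α γ x) (Set.Icc a b) := by
  unfold intg
  apply ContinuousOn.mul
  · exact contOn_cpow Complex.continuous_ofReal.continuousOn
      (fun t ht => by simpa using lt_of_lt_of_le ha ht.1) γ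
  · apply continuousOn_finset_prod
    intro k _
    unfold Zf
    exact contOn_cpow (by fun_prop)
      (fun t ht => re_pos _ _ _ (hx _) (hx _).le (le_trans ha.le ht.1)) _

lemma contOn_Dg {n : ℕ} (α : Fin n → ℂ) (γ : ℂ) (x : (Fin 2 × Fin n) → ℝ) (i : Fin n)
    {a b : ℝ} (ha : 0 < a) (hx : ∀ p, 0 < x p) :
    ContinuousOn (Dg α γ x i) (Set.Icc a b) := by
  unfold Dg
  apply ContinuousOn.mul
  apply ContinuousOn.mul
  · exact contOn_cpow Complex.continuous_ofReal.continuousOn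
      (fun t ht => by simpa using lt_of_lt_of_le ha ht.1) γ
  · apply ContinuousOn.mul
    apply ContinuousOn.mul
    · exact continuousOn_const
    · unfold Zf
      exact contOn_cpow (by fun_prop)
        (fun t ht => re_pos _ _ _ (hx _) (hx _).le (le_trans ha.le ht.1)) _
    · exact Complex.continuous_ofReal.continuousOn
  · apply continuousOn_finset_prod
    intro k _
    unfold Zf
    exact contOn_cpow (by fun_prop)
      (fun t ht => re_pos _ _ _ (hx _) (hx _).le (le_trans ha.le ht.1)) _

end Stmt5Aux

open Stmt5Aux MeasureTheory intervalIntegral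

set_option maxHeartbeats 1600000 in
/-- `Φ` satisfies the inhomogeneous equation
`Σᵢ x_{2i}·∂Φ/∂x_{2i} + (γ+1)·Φ = [g(t,x)]_{t=a}^{t=b}`. -/
theorem stmt5 {n : ℕ} (hn : 1 ≤ n) (α : Fin n → ℂ) (γ : ℂ) (a b : ℝ)
    (ha : 0 < a) (hab : a < b) (hγ : 0 < γ.re) (hα : ∀ k, 0 < (α k).re)
    (x : (Fin 2 × Fin n) → ℝ) (hx : ∀ p, 0 < x p) :
    ∑ i, (x (1, i) : ℂ) * pd (1, i) (Phi α γ a b) x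
      + (γ + 1) * Phi α γ a b x
      = gfun α γ b x - gfun α γ a x := by
  have hb : 0 < b := ha.trans hab
  have hIcc : Set.uIcc a b = Set.Icc a b := Set.uIcc_of_le hab.le
  have hIoc : Set.uIoc a b = Set.Ioc a b := Set.uIoc_of_le hab.le
  have hintg_int : IntervalIntegrable (intg α γ x) volume a b := by
    apply ContinuousOn.intervalIntegrable
    rw [hIcc]; exact contOn_intg α γ x ha hx
  have hDg_int : ∀ i, IntervalIntegrable (Dg α γ x i) volume a b := by
    intro i
    apply ContinuousOn.intervalIntegrable
    rw [hIcc]; exact contOn_Dg α γ x i ha hx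
  -- Step 1: the partial derivatives.
  have hpd : ∀ i, pd (1, i) (Phi α γ a b) x = ∫ t in a..b, Dg α γ x i t := by
    intro i
    set s₀ : ℝ := x (1, i) with hs₀def
    have hs₀pos : 0 < s₀ := hx _
    set F : ℝ → ℝ → ℂ := fun s t =>
      (t : ℂ) ^ γ * ((x (0, i) : ℂ) + (s : ℂ) * (t : ℂ)) ^ (α i) *
        ∏ k ∈ Finset.univ.erase i, Zf x k t ^ α k with hF
    set F' : ℝ → ℝ → ℂ := fun s t =>
      (t : ℂ) ^ γ * (α i * ((x (0, i) : ℂ) + (s : ℂ) * (t : ℂ)) ^ (α i - 1) * (t : ℂ)) *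
        ∏ k ∈ Finset.univ.erase i, Zf x k t ^ α k with hF'
    have hPhiF : ∀ s : ℝ, Phi α γ a b (Function.update x (1, i) s) = ∫ t in a..b, F s t := by
      intro s
      unfold Phi
      refine intervalIntegral.integral_congr fun t _ => ?_
      have h0 : ∀ k : Fin n, Function.update x (1, i) s (0, k) = x (0, k) := fun k =>
        Function.update_of_ne (by simp) _ _
      have h1 : ∀ k : Fin n, k ≠ i → Function.update x (1, i) s (1, k) = x (1, k) := fun k hk =>
        Function.update_of_ne (by simp [hk]) _ _
      have h2 : Function.update x (1, i) s (1, i) = s := Function.update_self _ _ _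
      rw [← Finset.mul_prod_erase Finset.univ _ (Finset.mem_univ i)]
      rw [hF]
      simp only [h0, h2]
      rw [Finset.prod_congr rfl (fun k hk => by rw [h1 k (Finset.ne_of_mem_erase hk)])]
      simp only [Zf, mul_assoc]
    have hmeas : ∀ s : ℝ, AEStronglyMeasurable (F s) (volume.restrict (Set.uIoc a b)) := by
      intro s
      apply Measurable.aestronglyMeasurable
      rw [hF]
      apply Measurable.mul
      · fun_prop
      · apply Finset.measurable_prod
        intro k _
        unfold Zf
        fun_prop
    have hF'meas : AEStronglyMeasurable (F' s₀) (volume.restrict (Set.uIoc a b)) := by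
      apply Measurable.aestronglyMeasurable
      rw [hF']
      apply Measurable.mul
      · fun_prop
      · apply Finset.measurable_prod
        intro k _
        unfold Zf
        fun_prop
    have hFint : IntervalIntegrable (F s₀) volume a b := by
      apply ContinuousOn.intervalIntegrable
      rw [hIcc, hF]
      apply ContinuousOn.mul
      apply ContinuousOn.mul
      · exact contOn_cpow Complex.continuous_ofReal.continuousOn
          (fun t ht => by simpa using lt_of_lt_of_le ha ht.1) γ
      · exact contOn_cpow (by fun_prop)
          (fun t ht => re_pos _ _ _ (hx _) hs₀pos.le (le_trans ha.le ht.1)) _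
      · apply continuousOn_finset_prod
        intro k _
        unfold Zf
        exact contOn_cpow (by fun_prop)
          (fun t ht => re_pos _ _ _ (hx _) (hx _).le (le_trans ha.le ht.1)) _
    -- uniform bound via compactness
    set K : Set (ℝ × ℝ) := Set.Icc (s₀ / 2) (s₀ + s₀ / 2) ×ˢ Set.Icc a b with hK
    have hKcomp : IsCompact K := isCompact_Icc.prod isCompact_Icc
    have hKcont : ContinuousOn (fun p : ℝ × ℝ => F' p.1 p.2) K := by
      rw [hF', hK]
      apply ContinuousOn.mul
      apply ContinuousOn.mul
      · exact contOn_cpow (by fun_prop)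
          (fun p hp => by simpa using lt_of_lt_of_le ha hp.2.1) γ
      · apply ContinuousOn.mul
        apply ContinuousOn.mul
        · exact continuousOn_const
        · exact contOn_cpow (by fun_prop)
            (fun p hp => re_pos _ _ _ (hx _)
              (le_trans (by positivity) hp.1.1) (le_trans ha.le hp.2.1)) _
        · fun_prop
      · apply continuousOn_finset_prod
        intro k _
        unfold Zf
        exact contOn_cpow (by fun_prop)
          (fun p hp => re_pos _ _ _ (hx _) (hx _).le (le_trans ha.le hp.2.1)) _
    obtain ⟨C, hC⟩ := hKcomp.exists_bound_of_continuousOn hKcont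
    have hball : ∀ s ∈ Metric.ball s₀ (s₀ / 2), s ∈ Set.Icc (s₀ / 2) (s₀ + s₀ / 2) := by
      intro s hs
      rw [Metric.mem_ball, Real.dist_eq, abs_sub_lt_iff] at hs
      constructor <;> linarith [hs.1, hs.2]
    have hballpos : ∀ s ∈ Metric.ball s₀ (s₀ / 2), 0 < s := by
      intro s hs
      have := (hball s hs).1
      linarith
    have h_bound : ∀ᵐ t ∂volume, t ∈ Set.uIoc a b →
        ∀ s ∈ Metric.ball s₀ (s₀ / 2), ‖F' s t‖ ≤ C := by
      apply Filter.Eventually.of_forall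
      intro t ht s hs
      rw [hIoc] at ht
      exact hC (s, t) ⟨hball s hs, ⟨ht.1.le, ht.2⟩⟩
    have h_diff : ∀ᵐ t ∂volume, t ∈ Set.uIoc a b →
        ∀ s ∈ Metric.ball s₀ (s₀ / 2), HasDerivAt (fun s => F s t) (F' s t) s := by
      apply Filter.Eventually.of_forall
      intro t ht s hs
      rw [hIoc] at ht
      have htpos : 0 < t := ha.trans ht.1
      have h1 := hasDerivAt_cpow_aff_s (x (0, i)) t s
        (re_pos _ _ _ (hx _) (hballpos s hs).le htpos.le) (α i)
      have h2 := (h1.const_mul ((t : ℂ) ^ γ)).mul_const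
        (∏ k ∈ Finset.univ.erase i, Zf x k t ^ α k)
      rw [hF, hF']
      exact h2
    have key := intervalIntegral.hasDerivAt_integral_of_dominated_loc_of_deriv_le
      (F := F) (F' := F') (x₀ := s₀) (bound := fun _ => C)
      (Metric.ball_mem_nhds _ (half_pos hs₀pos)) (Filter.Eventually.of_forall hmeas) hFint hF'meas h_bound
      intervalIntegrable_const h_diff
    have hfun : (fun s : ℝ => Phi α γ a b (Function.update x (1, i) s))
        = fun s => ∫ t in a..b, F s t := funext hPhiF
    have : pd (1, i) (Phi α γ a b) x = deriv (fun s => ∫ t in a..b, F s t) s₀ := by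
      unfold pd
      rw [hfun]
    rw [this, key.2.deriv]
    refine intervalIntegral.integral_congr fun t _ => ?_
    simp only [hF', Dg, Zf, hs₀def]
  -- Step 2: derivative of `gfun` in `t`.
  have hgd : ∀ t ∈ Set.uIcc a b, HasDerivAt (fun u : ℝ => gfun α γ u x)
      (∑ i, (x (1, i) : ℂ) * Dg α γ x i t + (γ + 1) * intg α γ x t) t := by
    intro t ht
    rw [hIcc] at ht
    have htpos : 0 < t := lt_of_lt_of_le ha ht.1
    have hT : HasDerivAt (fun u : ℝ => ((u : ℂ)) ^ (γ + 1)) ((γ + 1) * (t : ℂ) ^ γ) t := by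
      simpa [add_sub_cancel_right] using hasDerivAt_cpow_real t htpos (γ + 1)
    have hZ : ∀ k ∈ Finset.univ, HasDerivAt (fun u : ℝ => Zf x k u ^ α k)
        (α k * Zf x k t ^ (α k - 1) * (x (1, k) : ℂ)) t := by
      intro k _
      have := hasDerivAt_cpow_aff_t (x (0, k)) (x (1, k)) t
        (re_pos _ _ _ (hx _) (hx _).le htpos.le) (α k)
      simpa [Zf] using this
    have hP := HasDerivAt.fun_finsetProd hZ
    have hmul := hT.fun_mul hP
    have hmul' : HasDerivAt (fun u : ℝ => gfun α γ u x)
        ((γ + 1) * (t : ℂ) ^ γ * (∏ k, Zf x k t ^ α k) + (t : ℂ) ^ (γ + 1) *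
          ∑ k, (∏ j ∈ Finset.univ.erase k, Zf x j t ^ α j) •
            (α k * Zf x k t ^ (α k - 1) * (x (1, k) : ℂ))) t := by
      simpa [gfun, Zf] using hmul
    have hcp : (t : ℂ) ^ (γ + 1) = (t : ℂ) ^ γ * (t : ℂ) := by
      rw [Complex.cpow_add _ _ (Complex.ofReal_ne_zero.mpr htpos.ne'), Complex.cpow_one]
    have hval : (γ + 1) * (t : ℂ) ^ γ * (∏ k, Zf x k t ^ α k) + (t : ℂ) ^ (γ + 1) *
          ∑ k, (∏ j ∈ Finset.univ.erase k, Zf x j t ^ α j) •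
            (α k * Zf x k t ^ (α k - 1) * (x (1, k) : ℂ))
        = ∑ i, (x (1, i) : ℂ) * Dg α γ x i t + (γ + 1) * intg α γ x t := by
      rw [hcp, add_comm]
      congr 1
      · rw [Finset.mul_sum]
        apply Finset.sum_congr rfl
        intro k _
        simp only [Dg, smul_eq_mul]
        ring
      · simp only [intg]
        ring
    rw [← hval]
    exact hmul'
  have hsum_int : IntervalIntegrable (fun t => ∑ i, (x (1, i) : ℂ) * Dg α γ x i t)
      volume a b := by
    have heq : (fun t => ∑ i, (x (1, i) : ℂ) * Dg α γ x i t)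
        = ∑ i : Fin n, fun t => (x (1, i) : ℂ) * Dg α γ x i t := by
      funext t; simp [Finset.sum_apply]
    rw [heq]
    exact IntervalIntegrable.sum _ fun i _ => (hDg_int i).const_mul _
  have hW_int : IntervalIntegrable
      (fun t => ∑ i, (x (1, i) : ℂ) * Dg α γ x i t + (γ + 1) * intg α γ x t) volume a b :=
    hsum_int.add (hintg_int.const_mul _)
  have hFTC := intervalIntegral.integral_eq_sub_of_hasDerivAt hgd hW_int
  have hPhiEq : Phi α γ a b x = ∫ t in a..b, intg α γ x t := rfl
  calc
    ∑ i, (x (1, i) : ℂ) * pd (1, i) (Phi α γ a b) x + (γ + 1) * Phi α γ a b x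
        = ∑ i, (∫ t in a..b, (x (1, i) : ℂ) * Dg α γ x i t)
            + ∫ t in a..b, (γ + 1) * intg α γ x t := by
          rw [hPhiEq, intervalIntegral.integral_const_mul]
          congr 1
          exact Finset.sum_congr rfl fun i _ => by
            rw [hpd i, intervalIntegral.integral_const_mul]
    _ = (∫ t in a..b, ∑ i, (x (1, i) : ℂ) * Dg α γ x i t)
            + ∫ t in a..b, (γ + 1) * intg α γ x t := by
          congr 1
          exact (intervalIntegral.integral_finset_sum
            (fun i _ => (hDg_int i).const_mul _)).symm
    _ = ∫ t in a..b, (∑ i, (x (1, i) : ℂ) * Dg α γ x i t + (γ + 1) * intg α γ x t) :=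
          (intervalIntegral.integral_add hsum_int (hintg_int.const_mul _)).symm
    _ = gfun α γ b x - gfun α γ a x := hFTC
end

section
/- For every z = (z₁,…,zₙ) ∈ ℂⁿ with |z_k| < 1/b for all k, the family of complex numbers m ↦ c_m · ∏_{k=1}^n z_k^{m_k}, indexed by multi-indices m ∈ ℕⁿ, is absolutely summable. -/
set_option maxHeartbeats 4000000
open Complex Function Polynomial Filter

lemma lemA (x : ℂ) {t : ℝ} (ht0 : 0 ≤ t) (ht1 : t < 1) :
    Summable (fun m : ℕ => ‖(ascPochhammer ℂ m).eval x‖ * t ^ m / m.factorial) := by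
  set r : ℝ := (1 + t) / 2 with hr
  have hrt : t < r := by rw [hr]; linarith
  have hr1 : r < 1 := by rw [hr]; linarith
  have hr0 : 0 ≤ r := by positivity
  apply summable_of_ratio_norm_eventually_le hr1
  set M := ⌈‖x‖ * t / (r - t)⌉₊ with hM
  filter_upwards [eventually_ge_atTop M] with m hm
  have hnn : ∀ j : ℕ, 0 ≤ ‖(ascPochhammer ℂ j).eval x‖ * t ^ j / j.factorial := by
    intro j; positivity
  rw [Real.norm_of_nonneg (hnn _), Real.norm_of_nonneg (hnn _)]
  have key : ‖(ascPochhammer ℂ (m + 1)).eval x‖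
      = ‖(ascPochhammer ℂ m).eval x‖ * ‖x + m‖ := by
    rw [ascPochhammer_succ_right]
    simp [norm_mul]
  have hxt : ‖x‖ * t ≤ M * (r - t) := by
    rw [← div_le_iff₀ (by linarith : (0:ℝ) < r - t)]
    exact Nat.le_ceil _
  have hmain : ‖x + m‖ * t ≤ r * (m + 1) := by
    have h1 : ‖x + (m:ℂ)‖ ≤ ‖x‖ + m := by
      calc ‖x + (m:ℂ)‖ ≤ ‖x‖ + ‖(m:ℂ)‖ := norm_add_le _ _
      _ = ‖x‖ + m := by simp
    have h2 : (M:ℝ) ≤ m := by exact_mod_cast hm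
    have h3 : ‖x + (m:ℂ)‖ * t ≤ (‖x‖ + m) * t :=
      mul_le_mul_of_nonneg_right h1 ht0
    nlinarith [mul_le_mul_of_nonneg_right h2 (by linarith : (0:ℝ) ≤ r - t)]
  rw [key, Nat.factorial_succ]
  have hP : 0 ≤ ‖(ascPochhammer ℂ m).eval x‖ := norm_nonneg _
  have hfac : (0:ℝ) < m.factorial := by exact_mod_cast m.factorial_pos
  rw [pow_succ, mul_div_assoc']
  push_cast
  rw [div_le_div_iff₀ (by positivity) (by positivity)]
  have := mul_le_mul_of_nonneg_left hmain (by positivity : 0 ≤ ‖(ascPochhammer ℂ m).eval x‖ * t ^ m * (m.factorial : ℝ))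
  nlinarith [norm_nonneg (x + (m:ℂ)), pow_nonneg ht0 m]

lemma lemC (γ : ℂ) : ∃ C1 : ℝ, 0 ≤ C1 ∧ ∀ s : ℕ, ‖γ + (s:ℂ) + 1‖⁻¹ ≤ C1 := by
  refine ⟨1 + ∑ j ∈ Finset.range ⌈‖γ‖⌉₊, ‖γ + (j:ℂ) + 1‖⁻¹, by positivity, ?_⟩
  intro s
  by_cases hsN : s < ⌈‖γ‖⌉₊
  · have h := Finset.single_le_sum (f := fun j : ℕ => ‖γ + (j:ℂ) + 1‖⁻¹)
      (fun j _ => by positivity) (Finset.mem_range.mpr hsN)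
    linarith
  · push_neg at hsN
    have hγN : ‖γ‖ ≤ (⌈‖γ‖⌉₊ : ℝ) := Nat.le_ceil _
    have hNs : ((⌈‖γ‖⌉₊ : ℕ) : ℝ) ≤ s := by exact_mod_cast hsN
    have hnorm : ‖((s:ℂ) + 1)‖ = (s:ℝ) + 1 := by
      rw [show ((s:ℂ) + 1) = ((s + 1 : ℕ) : ℂ) by push_cast; ring, Complex.norm_natCast]
      push_cast; ring
    have h2 : (1:ℝ) ≤ ‖γ + (s:ℂ) + 1‖ := by
      have h3 : ‖((s:ℂ) + 1)‖ ≤ ‖γ + (s:ℂ) + 1‖ + ‖γ‖ := by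
        calc ‖((s:ℂ) + 1)‖ = ‖(γ + (s:ℂ) + 1) - γ‖ := by ring_nf
          _ ≤ ‖γ + (s:ℂ) + 1‖ + ‖γ‖ := norm_sub_le _ _
      rw [hnorm] at h3
      linarith
    have h4 : ‖γ + (s:ℂ) + 1‖⁻¹ ≤ 1 := inv_le_one_of_one_le₀ h2
    have h5 : (0:ℝ) ≤ ∑ j ∈ Finset.range ⌈‖γ‖⌉₊, ‖γ + (j:ℂ) + 1‖⁻¹ :=
      Finset.sum_nonneg fun j _ => inv_nonneg.mpr (norm_nonneg _)
    linarith

lemma lemB : ∀ {n : ℕ} (g : Fin n → ℕ → ℝ), (∀ k m, 0 ≤ g k m) →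
    (∀ k, Summable (g k)) → Summable (fun m : Fin n → ℕ => ∏ k, g k (m k)) := by
  intro n
  induction n with
  | zero => intro g _ _; exact summable_of_finite_support (Set.toFinite _)
  | succ n ih =>
    intro g hg hs
    have h2 : Summable (fun m : Fin n → ℕ => ∏ k, g k.succ (m k)) :=
      ih (fun k => g k.succ) (fun k m => hg _ _) (fun k => hs _)
    have h1 := Summable.mul_of_nonneg (hs 0) h2 (fun x => hg 0 x)
      (fun p => Finset.prod_nonneg fun k _ => hg _ _)
    have h3 := (Fin.consEquiv (fun _ : Fin (n+1) => ℕ)).symm.summable_iff.mpr h1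
    convert h3 using 1
    funext m
    simp [Fin.consEquiv, Fin.prod_univ_succ, Fin.tail]

noncomputable def cm {n : ℕ} (α : Fin n → ℂ) (γ : ℂ) (a b : ℝ)
    (m : Fin n → ℕ) : ℂ :=
  (-1 : ℂ) ^ (∑ k, m k) * (∏ k, (ascPochhammer ℂ (m k)).eval (-(α k)))
    * ((b : ℂ) ^ (γ + ((∑ k, m k : ℕ) : ℂ) + 1)
        - (a : ℂ) ^ (γ + ((∑ k, m k : ℕ) : ℂ) + 1))
    / ((γ + ((∑ k, m k : ℕ) : ℂ) + 1) * ∏ k, ((m k).factorial : ℂ))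

/-- for `|z_k| < 1/b` the family `m ↦ c_m ∏ₖ z_k^{m_k}` is
absolutely summable. -/
theorem stmt6 {n : ℕ} (hn : 1 ≤ n) (α : Fin n → ℂ) (γ : ℂ) (a b : ℝ)
    (ha : 0 < a) (hab : a < b) (hγ : ∀ j : ℕ, γ ≠ -((j : ℂ) + 1))
    (z : Fin n → ℂ) (hz : ∀ k, ‖z k‖ < 1 / b) :
    Summable (fun m : Fin n → ℕ => ‖cm α γ a b m * ∏ k, z k ^ m k‖) := by
  have hb : (0:ℝ) < b := ha.trans hab
  set f : Fin n → ℕ → ℝ := fun k m =>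
    ‖(ascPochhammer ℂ m).eval (-(α k))‖ * (b * ‖z k‖) ^ m / m.factorial with hf
  have hzk : ∀ k, b * ‖z k‖ < 1 := by
    intro k
    have h := (lt_div_iff₀ hb).mp (hz k)
    linarith [h, mul_comm b ‖z k‖]
  have hfs : ∀ k, Summable (f k) := fun k => lemA _ (by positivity) (hzk k)
  have hfnn : ∀ k m, 0 ≤ f k m := fun k m => by positivity
  have hpi := lemB f hfnn hfs
  obtain ⟨C1, hC1nn, hC1b⟩ := lemC γ
  set C2 : ℝ := b ^ (γ.re + 1) + a ^ (γ.re + 1) with hC2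
  have hC2nn : (0:ℝ) ≤ C2 := by
    rw [hC2]; positivity
  have hsum : Summable (fun m : Fin n → ℕ => C1 * C2 * ∏ k, f k (m k)) :=
    hpi.mul_left _
  refine Summable.of_nonneg_of_le (fun m => norm_nonneg _) (fun m => ?_) hsum
  set s := ∑ k, m k with hs
  set w : ℂ := γ + (s:ℂ) + 1 with hw
  set Q : ℝ := ∏ k, (‖(ascPochhammer ℂ (m k)).eval (-(α k))‖ * ‖z k‖ ^ m k
      / ((m k).factorial : ℝ)) with hQ
  have hQnn : 0 ≤ Q := by rw [hQ]; positivity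
  have hfQ : ∏ k, f k (m k) = b ^ s * Q := by
    calc ∏ k, f k (m k)
        = ∏ k, (b ^ m k * (‖(ascPochhammer ℂ (m k)).eval (-(α k))‖ * ‖z k‖ ^ m k
            / ((m k).factorial : ℝ))) := by
          refine Finset.prod_congr rfl fun k _ => ?_
          rw [hf]; simp only [mul_pow]; ring
      _ = (∏ k, b ^ m k) * Q := Finset.prod_mul_distrib
      _ = b ^ s * Q := by rw [Finset.prod_pow_eq_pow_sum]
  have hwre : w.re = (γ.re + 1) + s := by
    rw [hw]; simp [Complex.add_re]; ring
  have hbw : ‖(b:ℂ) ^ w‖ = b ^ (γ.re + 1) * b ^ s := by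
    rw [Complex.norm_cpow_eq_rpow_re_of_pos hb, hwre,
      Real.rpow_add hb, Real.rpow_natCast]
  have haw : ‖(a:ℂ) ^ w‖ = a ^ (γ.re + 1) * a ^ s := by
    rw [Complex.norm_cpow_eq_rpow_re_of_pos ha, hwre,
      Real.rpow_add ha, Real.rpow_natCast]
  have h1 : ‖(b:ℂ) ^ w - (a:ℂ) ^ w‖ ≤ C2 * b ^ s := by
    calc ‖(b:ℂ) ^ w - (a:ℂ) ^ w‖ ≤ ‖(b:ℂ) ^ w‖ + ‖(a:ℂ) ^ w‖ := norm_sub_le _ _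
      _ = b ^ (γ.re + 1) * b ^ s + a ^ (γ.re + 1) * a ^ s := by rw [hbw, haw]
      _ ≤ b ^ (γ.re + 1) * b ^ s + a ^ (γ.re + 1) * b ^ s := by
          have h6 := pow_le_pow_left₀ ha.le hab.le s
          nlinarith [Real.rpow_nonneg ha.le (γ.re + 1)]
      _ = C2 * b ^ s := by rw [hC2]; ring
  have hls : ‖cm α γ a b m * ∏ k, z k ^ m k‖ = ‖(b:ℂ) ^ w - (a:ℂ) ^ w‖ * ‖w‖⁻¹ * Q := by
    rw [cm, hQ]
    rw [Finset.prod_div_distrib, Finset.prod_mul_distrib]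
    simp only [norm_mul, norm_div, norm_prod, norm_pow, norm_neg, norm_one, one_pow,
      Complex.norm_natCast]
    rw [← hs, ← hw]
    field_simp
  rw [hls]
  calc ‖(b:ℂ) ^ w - (a:ℂ) ^ w‖ * ‖w‖⁻¹ * Q ≤ (C2 * b ^ s) * C1 * Q := by
        have := hC1b s
        rw [← hw] at this
        gcongr
    _ = C1 * C2 * (b ^ s * Q) := by ring
    _ = C1 * C2 * ∏ k, f k (m k) := by rw [hfQ]
end
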